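/- arXiv:2103.16883 — 2 statements merged into one kernel-verified Lean document; each statement's English description precedes it below -/
import Mathlib

section
/- Let R be a commutative ring, H an R-Hopf algebra, and M a Hopf module over H (i.e. M is a left H-module and an H-comodule whose coaction map is a morphism of H-modules, H acting on itself by left multiplication). Then the map μ : H ⊗_R M^{coH} → M given by μ(h ⊗ m) = h·m, where M^{coH} denotes the coinvariants {m ∈ M | ρ(m) = 1 ⊗ m}, is an isomorphism of H-modules. -/
open TensorProduct

variable {R H M : Type} [CommRing R] [Ring H] [HopfAlgebra R H]
  [AddCommGroup M] [Module R M]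

/-- The coinvariants `M^{coH} = {m ∈ M : ρ m = 1 ⊗ m}` of a comodule `(M, ρ)`. -/
def hopfCoinvariants (ρ : M →ₗ[R] H ⊗[R] M) : Submodule R M where
  carrier := {m | ρ m = (1 : H) ⊗ₜ[R] m}
  add_mem' := by
    intro a b ha hb
    simp only [Set.mem_setOf_eq] at *
    rw [map_add, ha, hb, TensorProduct.tmul_add]
  zero_mem' := by simp [Set.mem_setOf_eq]
  smul_mem' := by
    intro c x hx
    simp only [Set.mem_setOf_eq] at *
    rw [map_smul, hx, TensorProduct.tmul_smul]

namespace HopfAux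

open Coalgebra LinearMap

local notation "Δ" => Coalgebra.comul (R := R) (A := H)
local notation "ε" => Coalgebra.counit (R := R) (A := H)
local notation "𝒮" => HopfAlgebra.antipode (R := R) (A := H)

section Conv
variable {A : Type} [Ring A] [Algebra R A]

/-- Convolution product on `Hom(H, A)`. -/
noncomputable def conv (f g : H →ₗ[R] A) : H →ₗ[R] A :=
  LinearMap.mul' R A ∘ₗ map f g ∘ₗ Δ

/-- Convolution unit. -/
noncomputable def convOne : H →ₗ[R] A := Algebra.linearMap R A ∘ₗ ε

lemma conv_apply (f g : H →ₗ[R] A) (a : H) :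
    conv f g a = mul' R A (map f g (Δ a)) := rfl

lemma conv_one_left (f : H →ₗ[R] A) : conv convOne f = f := by
  have h1 : map (convOne (A := A)) f
      = map (Algebra.linearMap R A) f ∘ₗ rTensor H ε := by
    rw [rTensor, ← map_comp]; simp [convOne]
  ext a
  rw [conv_apply, h1]
  simp only [coe_comp, Function.comp_apply]
  rw [Coalgebra.rTensor_counit_comul]
  simp

lemma conv_one_right (f : H →ₗ[R] A) : conv f convOne = f := by
  have h1 : map f (convOne (A := A))
      = map f (Algebra.linearMap R A) ∘ₗ lTensor H ε := by
    rw [lTensor, ← map_comp]; simp [convOne]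
  ext a
  rw [conv_apply, h1]
  simp only [coe_comp, Function.comp_apply]
  rw [Coalgebra.lTensor_counit_comul]
  simp

lemma conv_assoc (f g h : H →ₗ[R] A) : conv (conv f g) h = conv f (conv g h) := by
  have F1 : ∀ t : H ⊗[R] H, map (conv f g) h t
      = (map (mul' R A ∘ₗ map f g) LinearMap.id)
          ((lTensor (H ⊗[R] H) h) ((rTensor H Δ) t)) := by
    intro t
    induction t using TensorProduct.induction_on with
    | zero => simp
    | tmul x y => simp [conv_apply]
    | add s t hs ht => simp [map_add, hs, ht]
  have F2 : ∀ t : H ⊗[R] H, map f (conv g h) t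
      = (map LinearMap.id (mul' R A ∘ₗ map g h))
          ((rTensor (H ⊗[R] H) f) ((lTensor H Δ) t)) := by
    intro t
    induction t using TensorProduct.induction_on with
    | zero => simp
    | tmul x y => simp [conv_apply]
    | add s t hs ht => simp [map_add, hs, ht]
  have key : mul' R A ∘ₗ map (mul' R A ∘ₗ map f g) LinearMap.id ∘ₗ lTensor (H ⊗[R] H) h
      = mul' R A ∘ₗ map LinearMap.id (mul' R A ∘ₗ map g h) ∘ₗ rTensor (H ⊗[R] H) f
          ∘ₗ (TensorProduct.assoc R H H H).toLinearMap := by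
    apply TensorProduct.ext_threefold
    intro x y z
    simp [mul_assoc]
  ext a
  rw [conv_apply, conv_apply, F1 (Δ a), F2 (Δ a)]
  have := LinearMap.congr_fun key ((rTensor H Δ) (Δ a))
  simp only [coe_comp, Function.comp_apply, LinearEquiv.coe_coe] at this
  rw [this, Coalgebra.coassoc_apply]

end Conv

section Key

/-- `g' h = Σ S(h₂) ⊗ S(h₁)`. -/
noncomputable def gS : H →ₗ[R] H ⊗[R] H :=
  (TensorProduct.comm R H H).toLinearMap ∘ₗ map 𝒮 𝒮 ∘ₗ Δ

variable {N : Type} [AddCommGroup N] [Module R N]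

/-- The fundamental Sweedler computation:
`Σ S(h₂) h₃ ⊗ S(h₁)·n = 1 ⊗ S(h)·n`, stated point-free. -/
lemma key_lemma (act : H ⊗[R] N →ₗ[R] N) (t : H ⊗[R] N) :
    (map (mul' R H) act)
      ((tensorTensorTensorComm R H H H N)
        ((map gS LinearMap.id)
          ((TensorProduct.assoc R H H N) ((rTensor N Δ) t))))
    = (1 : H) ⊗ₜ[R] act (map 𝒮 LinearMap.id t) := by
  set n₃ : H ⊗[R] H →ₗ[R] H := mul' R H ∘ₗ rTensor H 𝒮 with hn₃
  set ζ : (H ⊗[R] H) ⊗[R] N →ₗ[R] H ⊗[R] N :=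
    lTensor H (act ∘ₗ map 𝒮 LinearMap.id) ∘ₗ (TensorProduct.assoc R H H N).toLinearMap
      ∘ₗ rTensor N (TensorProduct.comm R H H).toLinearMap with hζ
  set K : ((H ⊗[R] H) ⊗[R] H) ⊗[R] N →ₗ[R] H ⊗[R] N :=
    map (mul' R H) act ∘ₗ (tensorTensorTensorComm R H H H N).toLinearMap
      ∘ₗ map ((TensorProduct.comm R H H).toLinearMap ∘ₗ map 𝒮 𝒮) LinearMap.id
      ∘ₗ (TensorProduct.assoc R (H ⊗[R] H) H N).toLinearMap with hK
  have A1 : ∀ (s : H ⊗[R] H) (n : N),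
      (map (mul' R H) act)
        ((tensorTensorTensorComm R H H H N)
          ((map gS LinearMap.id) ((TensorProduct.assoc R H H N) (s ⊗ₜ n))))
      = K ((rTensor H Δ s) ⊗ₜ n) := by
    intro s n
    induction s using TensorProduct.induction_on with
    | zero => simp
    | tmul x y =>
      simp only [assoc_tmul, map_tmul, rTensor_tmul, gS, coe_comp, Function.comp_apply,
        LinearEquiv.coe_coe, id_coe, id_eq]
      generalize Coalgebra.comul (R := R) x = s
      induction s using TensorProduct.induction_on with
      | zero => simp
      | tmul p q => simp [hK]
      | add s₁ s₂ h1 h2 => simp only [map_add, add_tmul, h1, h2]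
    | add s₁ s₂ h1 h2 => simp only [map_add, add_tmul, h1, h2]
  have A3 : ∀ (s : H ⊗[R] (H ⊗[R] H)) (n : N),
      K (((TensorProduct.assoc R H H H).symm s) ⊗ₜ n) = ζ ((lTensor H n₃ s) ⊗ₜ n) := by
    intro s n
    induction s using TensorProduct.induction_on with
    | zero => simp
    | tmul p s' =>
      induction s' using TensorProduct.induction_on with
      | zero => simp [tmul_zero]
      | tmul q q' => simp [hK, hζ, hn₃]
      | add s₁ s₂ h1 h2 => simp only [map_add, tmul_add, add_tmul, h1, h2]
    | add s₁ s₂ h1 h2 => simp only [map_add, add_tmul, h1, h2]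
  have A4 : lTensor H n₃ ∘ₗ lTensor H Δ
      = lTensor H (Algebra.linearMap R H ∘ₗ ε) := by
    rw [← lTensor_comp]
    congr 1
    rw [hn₃, LinearMap.comp_assoc]
    exact HopfAlgebra.mul_antipode_rTensor_comul
  induction t using TensorProduct.induction_on with
  | zero => simp
  | tmul h n =>
    rw [rTensor_tmul, A1 (Δ h) n]
    rw [show (rTensor H Δ) (Δ h)
        = (TensorProduct.assoc R H H H).symm ((lTensor H Δ) (Δ h)) from
      (Coalgebra.coassoc_symm_apply h).symm]
    rw [A3, ← comp_apply, A4]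
    have A5 : (lTensor H (Algebra.linearMap R H ∘ₗ ε)) (Δ h) = h ⊗ₜ (1 : H) := by
      have : lTensor H (Algebra.linearMap R H ∘ₗ ε)
          = lTensor H (Algebra.linearMap R H) ∘ₗ lTensor H ε := by
        rw [← lTensor_comp]
      rw [this, comp_apply, Coalgebra.lTensor_counit_comul]
      simp
    rw [A5]
    simp [hζ]
  | add t₁ t₂ h1 h2 => simp only [map_add, h1, h2, tmul_add]

lemma mulHH_eq (s : (H ⊗[R] H) ⊗[R] (H ⊗[R] H)) :
    mul' R (H ⊗[R] H) s
      = map (mul' R H) (mul' R H) ((tensorTensorTensorComm R H H H H) s) := by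
  induction s using TensorProduct.induction_on with
  | zero => simp
  | tmul u v =>
    induction u using TensorProduct.induction_on with
    | zero => simp
    | tmul x y =>
      induction v using TensorProduct.induction_on with
      | zero => simp [tmul_zero]
      | tmul z w => simp [Algebra.TensorProduct.tmul_mul_tmul]
      | add v₁ v₂ h1 h2 => simp only [map_add, tmul_add, h1, h2]
    | add u₁ u₂ h1 h2 => simp only [map_add, add_tmul, h1, h2]
  | add s₁ s₂ h1 h2 => simp only [map_add, h1, h2]

lemma conv_comul_antipode :
    conv (A := H ⊗[R] H) Δ ((Δ : H →ₗ[R] H ⊗[R] H) ∘ₗ 𝒮) = convOne := by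
  have F : ∀ t : H ⊗[R] H, mul' R (H ⊗[R] H) (map Δ ((Δ : H →ₗ[R] H ⊗[R] H) ∘ₗ 𝒮) t)
      = Δ (mul' R H ((lTensor H 𝒮) t)) := by
    intro t
    induction t using TensorProduct.induction_on with
    | zero => simp
    | tmul x y =>
      simp only [map_tmul, coe_comp, Function.comp_apply, lTensor_tmul, mul'_apply]
      rw [← Bialgebra.comulAlgHom_apply R H, ← Bialgebra.comulAlgHom_apply R H,
        ← Bialgebra.comulAlgHom_apply R H, ← map_mul]
    | add t₁ t₂ h1 h2 => simp only [map_add, h1, h2]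
  ext a
  rw [conv_apply, F (Δ a), HopfAlgebra.mul_antipode_lTensor_comul_apply]
  rw [← Bialgebra.comulAlgHom_apply R H, AlgHom.commutes]
  simp [convOne]

lemma conv_gS_comul : conv (A := H ⊗[R] H) gS Δ = convOne := by
  ext a
  have e0 : map gS (Δ : H →ₗ[R] H ⊗[R] H)
      = map gS LinearMap.id ∘ₗ lTensor H Δ := by
    rw [lTensor, ← map_comp]; simp
  rw [conv_apply, e0, comp_apply]
  rw [show (lTensor H Δ) (Δ a) = (TensorProduct.assoc R H H H) ((rTensor H Δ) (Δ a)) from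
    (Coalgebra.coassoc_apply a).symm]
  rw [mulHH_eq, key_lemma (mul' R H) (Δ a)]
  have : mul' R H ((map 𝒮 LinearMap.id) (Δ a)) = algebraMap R H (ε a) := by
    have : map 𝒮 (LinearMap.id (R := R) (M := H)) = rTensor H 𝒮 := rfl
    rw [this, HopfAlgebra.mul_antipode_rTensor_comul_apply]
  rw [this]
  simp [convOne, Algebra.TensorProduct.algebraMap_apply, Algebra.algebraMap_eq_smul_one,
    smul_tmul, tmul_smul, Algebra.TensorProduct.one_def]

/-- The antipode is anti-comultiplicative: `Δ(S h) = Σ S(h₂) ⊗ S(h₁)`. -/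
lemma antipode_comul : (Δ : H →ₗ[R] H ⊗[R] H) ∘ₗ 𝒮 = gS := by
  calc (Δ : H →ₗ[R] H ⊗[R] H) ∘ₗ 𝒮
      = conv convOne ((Δ : H →ₗ[R] H ⊗[R] H) ∘ₗ 𝒮) := (conv_one_left _).symm
    _ = conv (conv gS Δ) ((Δ : H →ₗ[R] H ⊗[R] H) ∘ₗ 𝒮) := by rw [conv_gS_comul]
    _ = conv gS (conv Δ ((Δ : H →ₗ[R] H ⊗[R] H) ∘ₗ 𝒮)) := conv_assoc _ _ _
    _ = conv gS convOne := by rw [conv_comul_antipode]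
    _ = gS := conv_one_right _

end Key

end HopfAux

open LinearMap HopfAux

lemma mem_hopfCoinvariants {R H M : Type} [CommRing R] [Ring H] [HopfAlgebra R H]
    [AddCommGroup M] [Module R M] (ρ : M →ₗ[R] H ⊗[R] M) (m : M) :
    m ∈ hopfCoinvariants ρ ↔ ρ m = (1 : H) ⊗ₜ[R] m := Iff.rfl

/-- Fundamental theorem of Hopf modules: Let `H` be a Hopf algebra over a
commutative ring `R` and `M` a Hopf module over `H`: `M` is a left `H`-module (action
`act`, encoded by `smulM : H ⊗ M → M`), a left `H`-comodule (coaction `ρ`), and `ρ` is a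
map of `H`-modules where `H ⊗ M` carries the action `h • (k ⊗ m) = Δ(h)(k ⊗ m)`.  Then
`μ : H ⊗_R M^{coH} → M`, `h ⊗ m ↦ h • m`, is an isomorphism (it is `H`-linear by
construction and bijective). -/
theorem hopf_module_structure_theorem
    (smulM : H ⊗[R] M →ₗ[R] M)
    (hone : ∀ m : M, smulM ((1 : H) ⊗ₜ[R] m) = m)
    (hassoc : ∀ (h k : H) (m : M),
      smulM (h ⊗ₜ[R] smulM (k ⊗ₜ[R] m)) = smulM ((h * k) ⊗ₜ[R] m))
    (ρ : M →ₗ[R] H ⊗[R] M)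
    (hcounit : ∀ m : M,
      (TensorProduct.lid R M)
        ((TensorProduct.map (Coalgebra.counit (R := R) (A := H)) LinearMap.id)
          (ρ m)) = m)
    (hcoassoc :
      (TensorProduct.assoc R H H M).toLinearMap.comp
          ((TensorProduct.map (Coalgebra.comul (R := R) (A := H))
            LinearMap.id).comp ρ) =
        (TensorProduct.map LinearMap.id ρ).comp ρ)
    -- `ρ` is `H`-linear: ρ(h·m) = Δ(h)·ρ(m)
    (hcompat :
      ρ.comp smulM =
        (TensorProduct.map (LinearMap.mul' R H) smulM).comp
          ((TensorProduct.tensorTensorTensorComm R H H H M).toLinearMap.comp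
            (TensorProduct.map (Coalgebra.comul (R := R) (A := H)) ρ))) :
    Function.Bijective
      (smulM.comp
        (TensorProduct.map LinearMap.id (hopfCoinvariants ρ).subtype)) := by
  set S : H →ₗ[R] H := HopfAlgebra.antipode (R := R) (A := H) with hS
  set Γ : H ⊗[R] M →ₗ[R] M := smulM ∘ₗ map S LinearMap.id with hΓ
  set P : M →ₗ[R] M := Γ ∘ₗ ρ with hP
  -- coassociativity, applied
  have hco : ∀ m : M, (lTensor H ρ) (ρ m)
      = (TensorProduct.assoc R H H M) ((rTensor M (Coalgebra.comul (R := R))) (ρ m)) := by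
    intro m
    exact (LinearMap.congr_fun hcoassoc m).symm
  -- P lands in the coinvariants
  have keyC : ∀ m : M, ρ (P m) = (1 : H) ⊗ₜ[R] P m := by
    intro m
    have e1 : map (Coalgebra.comul (R := R)) ρ ∘ₗ map S (LinearMap.id (R := R) (M := M))
        = map (gS (R := R) (H := H)) LinearMap.id ∘ₗ lTensor H ρ := by
      rw [lTensor, ← map_comp, ← map_comp, ← antipode_comul]
      simp [hS]
    have e2 := LinearMap.congr_fun hcompat ((map S LinearMap.id) (ρ m))
    simp only [coe_comp, Function.comp_apply, LinearEquiv.coe_coe] at e2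
    calc ρ (P m) = ρ (smulM ((map S LinearMap.id) (ρ m))) := rfl
      _ = (map (mul' R H) smulM)
          ((tensorTensorTensorComm R H H H M)
            ((map (Coalgebra.comul (R := R)) ρ) ((map S LinearMap.id) (ρ m)))) := e2
      _ = (map (mul' R H) smulM)
          ((tensorTensorTensorComm R H H H M)
            ((map (gS (R := R) (H := H)) LinearMap.id)
              ((TensorProduct.assoc R H H M)
                ((rTensor M (Coalgebra.comul (R := R))) (ρ m))))) := by
          rw [← comp_apply, e1, comp_apply, hco m]
      _ = (1 : H) ⊗ₜ[R] smulM ((map S LinearMap.id) (ρ m)) := key_lemma smulM (ρ m)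
      _ = (1 : H) ⊗ₜ[R] P m := rfl
  set P' : M →ₗ[R] hopfCoinvariants ρ :=
    P.codRestrict (hopfCoinvariants ρ) (fun m => (mem_hopfCoinvariants ρ (P m)).2 (keyC m))
    with hP'
  set ν : M →ₗ[R] H ⊗[R] (hopfCoinvariants ρ) := lTensor H P' ∘ₗ ρ with hν
  set μ : H ⊗[R] (hopfCoinvariants ρ) →ₗ[R] M :=
    smulM.comp (TensorProduct.map LinearMap.id (hopfCoinvariants ρ).subtype) with hμ
  have left : ∀ m : M, μ (ν m) = m := by
    intro m
    have e3 : μ (ν m) = smulM ((lTensor H P) (ρ m)) := by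
      simp only [hμ, hν, coe_comp, Function.comp_apply]
      rw [← comp_apply (map LinearMap.id (hopfCoinvariants ρ).subtype), ← lTensor,
        ← lTensor_comp, LinearMap.subtype_comp_codRestrict]
    have E5 : ∀ t : (H ⊗[R] H) ⊗[R] M,
        smulM ((lTensor H Γ) ((TensorProduct.assoc R H H M) t))
        = smulM ((rTensor M (mul' R H ∘ₗ lTensor H S)) t) := by
      intro t
      induction t using TensorProduct.induction_on with
      | zero => simp
      | tmul u n =>
        induction u using TensorProduct.induction_on with
        | zero => simp [zero_tmul]
        | tmul x y => simp [hΓ, hassoc x (S y) n]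
        | add u₁ u₂ h1 h2 => simp only [map_add, add_tmul, h1, h2]
      | add t₁ t₂ h1 h2 => simp only [map_add, h1, h2]
    rw [e3, hP, lTensor_comp, comp_apply, hco m, E5]
    have e4 : (mul' R H ∘ₗ lTensor H S) ∘ₗ (Coalgebra.comul (R := R))
        = Algebra.linearMap R H ∘ₗ (Coalgebra.counit (R := R)) := by
      rw [LinearMap.comp_assoc]
      exact HopfAlgebra.mul_antipode_lTensor_comul
    have e4' : (rTensor M (mul' R H ∘ₗ lTensor H S)) ((rTensor M (Coalgebra.comul (R := R))) (ρ m))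
        = (rTensor M (Algebra.linearMap R H)) ((rTensor M (Coalgebra.counit (R := R))) (ρ m)) := by
      rw [← comp_apply, ← rTensor_comp, e4, rTensor_comp, comp_apply]
    rw [e4']
    have e5 : (rTensor M (Coalgebra.counit (R := R))) (ρ m) = (1 : R) ⊗ₜ[R] m := by
      have := hcounit m
      have h' : (map (Coalgebra.counit (R := R)) (LinearMap.id (R := R) (M := M))) (ρ m)
          = (TensorProduct.lid R M).symm m := by
        rw [LinearEquiv.eq_symm_apply]; exact this
      rw [rTensor]; simpa [lid_symm_apply] using h'
    rw [e5]
    simp [hone]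
  have right : ∀ x : H ⊗[R] (hopfCoinvariants ρ), ν (μ x) = x := by
    have claimA : ∀ (h : H) (m : hopfCoinvariants ρ),
        ρ (smulM (h ⊗ₜ[R] (m : M)))
        = (map LinearMap.id (smulM ∘ₗ (mk R H M).flip (m : M)))
            (Coalgebra.comul (R := R) h) := by
      intro h m
      have e2 := LinearMap.congr_fun hcompat (h ⊗ₜ[R] (m : M))
      simp only [coe_comp, Function.comp_apply, LinearEquiv.coe_coe, map_tmul] at e2
      rw [e2, m.2]
      generalize Coalgebra.comul (R := R) h = t
      induction t using TensorProduct.induction_on with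
      | zero => simp
      | tmul x y => simp [tensorTensorTensorComm_tmul]
      | add t₁ t₂ h1 h2 => simp only [map_add, add_tmul, h1, h2]
    have claimB : ∀ (y : H) (m : hopfCoinvariants ρ),
        P (smulM (y ⊗ₜ[R] (m : M)))
        = Coalgebra.counit (R := R) y • (m : M) := by
      intro y m
      have : P (smulM (y ⊗ₜ[R] (m : M)))
          = smulM ((map S (smulM ∘ₗ (mk R H M).flip (m : M)))
              (Coalgebra.comul (R := R) y)) := by
        rw [hP, comp_apply, claimA y m, hΓ, comp_apply, ← comp_apply (map S LinearMap.id),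
          ← map_comp]
        simp
      rw [this]
      have E7 : ∀ t : H ⊗[R] H,
          smulM ((map S (smulM ∘ₗ (mk R H M).flip (m : M))) t)
          = smulM (((mul' R H ∘ₗ rTensor H S) t) ⊗ₜ[R] (m : M)) := by
        intro t
        induction t using TensorProduct.induction_on with
        | zero => simp
        | tmul x y => simp [hassoc (S x) y (m : M)]
        | add t₁ t₂ h1 h2 => simp only [map_add, add_tmul, h1, h2]
      rw [E7, comp_apply, HopfAlgebra.mul_antipode_rTensor_comul_apply,
        Algebra.algebraMap_eq_smul_one, ← smul_tmul', map_smul, hone]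
    intro x
    induction x using TensorProduct.induction_on with
    | zero => simp
    | tmul h m =>
      have e6 : μ (h ⊗ₜ[R] m) = smulM (h ⊗ₜ[R] (m : M)) := by simp [hμ]
      rw [e6, hν, comp_apply, claimA h m, ← lTensor, ← comp_apply (lTensor H P'),
        ← lTensor_comp]
      have e7 : P' ∘ₗ (smulM ∘ₗ (mk R H M).flip (m : M))
          = LinearMap.toSpanSingleton R (hopfCoinvariants ρ) m ∘ₗ
              (Coalgebra.counit (R := R) (A := H)) := by
        apply LinearMap.ext
        intro y
        apply Subtype.ext
        simp only [coe_comp, Function.comp_apply, toSpanSingleton_apply]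
        rw [hP', codRestrict_apply]
        exact (claimB y m).trans (by simp [Submodule.coe_smul])
      rw [e7, lTensor_comp, comp_apply, Coalgebra.lTensor_counit_comul]
      simp
    | add x₁ x₂ h1 h2 => simp only [map_add, h1, h2]
  exact Function.bijective_iff_has_inverse.mpr ⟨ν, right, left⟩
end

section
/- Let R be a commutative ring, A a commutative R-algebra, L an (R,A)-Lie–Rinehart algebra containing A as a Lie ideal with trivial bracket (i.e. 0 → A → L → ρ(L) → 0 exact), and let 1_L be the image of 1 ∈ A. Let M be an L-module (in the Lie–Rinehart sense) such that the action of 1_L ∈ L coincides with the action of 1 ∈ A (i.e. 1_L·m = m for all m ∈ M). Then M is a module over the quotient algebra D = U(L)/U(L)(i(1) − j(1)), and conversely every D-module arises this way; this correspondence is bijective. -/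
/-- An `(R,A)`-Lie–Rinehart algebra structure on `L`: an `A`-module `L` with an `R`-Lie
algebra structure and an anchor `ρ : L → Der_R(A)` which is an `A`-module map and a Lie
algebra map, satisfying the Leibniz rule `⁅x, a • y⁆ = a • ⁅x,y⁆ + ρ(x)(a) • y`. -/
structure LieRinehartStr (R A L : Type) [CommRing R] [CommRing A] [Algebra R A]
    [LieRing L] [Module R L] [Module A L] [IsScalarTower R A L] where
  ρ : L →ₗ[A] Derivation R A A
  map_lie : ∀ x y : L, ρ ⁅x, y⁆ = ⁅ρ x, ρ y⁆
  leibniz : ∀ (x y : L) (a : A), ⁅x, a • y⁆ = a • ⁅x, y⁆ + ρ x a • y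

/-- The universal enveloping algebra of an `(R,A)`-Lie–Rinehart algebra `L`, given by
its universal property: `U` is an `R`-algebra generated by `A` and `L` subject to
`j(a • x) = i(a) j(x)`, `j(x) i(a) − i(a) j(x) = i(ρ(x)(a))`, and
`j(x) j(y) − j(y) j(x) = j(⁅x,y⁆)`, universal among such. -/
structure LREnvelope {R A L : Type} [CommRing R] [CommRing A] [Algebra R A]
    [LieRing L] [Module R L] [Module A L] [IsScalarTower R A L]
    (LR : LieRinehartStr R A L) (U : Type) [Ring U] [Algebra R U] where
  i : A →ₐ[R] U
  j : L →ₗ[R] U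
  smul_rel : ∀ (a : A) (x : L), j (a • x) = i a * j x
  der_rel : ∀ (x : L) (a : A), j x * i a - i a * j x = i (LR.ρ x a)
  lie_rel : ∀ x y : L, j x * j y - j y * j x = j ⁅x, y⁆
  universal : ∀ (S : Type) [Ring S] [Algebra R S] (i' : A →ₐ[R] S) (j' : L →ₗ[R] S),
    (∀ (a : A) (x : L), j' (a • x) = i' a * j' x) →
    (∀ (x : L) (a : A), j' x * i' a - i' a * j' x = i' (LR.ρ x a)) →
    (∀ x y : L, j' x * j' y - j' y * j' x = j' ⁅x, y⁆) →
    ∃! φ : U →ₐ[R] S, φ.comp i = i' ∧ φ.toLinearMap.comp j = j'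

/-- Let `L` be an `(R,A)`-Lie–Rinehart algebra containing `A` as a Lie
ideal with trivial bracket (via an injective `A`-linear `ι : A → L` with
`range ι = ker ρ`), and let `1_L = ι(1)`.  A Picard `L`-module `M` (an `L`-module on
which `1_L` acts as the identity) is the same thing as a module over
`D = U(L)/U(L)(i(1) − j(1_L))`: the action extends uniquely to `φ : U(L) → End(M)`
killing `i(1) − j(1_L)`, and conversely any `ψ : U(L) → End(M)` killing `i(1) − j(1_L)`
induces an `L`-module structure on `M` on which `1_L` acts as the identity and whose two
`A`-actions agree. -/
theorem picard_module_correspondence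
    {R A L U M : Type} [CommRing R] [CommRing A] [Algebra R A]
    [LieRing L] [Module R L] [Module A L] [IsScalarTower R A L]
    [Ring U] [Algebra R U]
    [AddCommGroup M] [Module R M] [Module A M] [IsScalarTower R A M]
    (LR : LieRinehartStr R A L) (env : LREnvelope LR U)
    (ι : A →ₗ[A] L) (hιinj : Function.Injective ι)
    (hιbracket : ∀ a a' : A, ⁅ι a, ι a'⁆ = 0)
    (hιker : ∀ x : L, LR.ρ x = 0 ↔ x ∈ LinearMap.range ι)
    (aL : L →ₗ[R] Module.End R M)
    (haxiom1 : ∀ (f : A) (l : L) (m : M),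
      f • (aL l m) = aL l (f • m) - (LR.ρ l f) • m)
    (haxiom2 : ∀ (f : A) (l : L) (m : M), aL (f • l) m = f • (aL l m))
    (haxiom3 : ∀ (l l' : L) (m : M),
      aL ⁅l, l'⁆ m = aL l (aL l' m) - aL l' (aL l m))
    (hpicard : ∀ m : M, aL (ι 1) m = m) :
    (∃! φ : U →ₐ[R] Module.End R M,
      (∀ (a : A) (m : M), φ (env.i a) m = a • m) ∧
      (∀ (l : L) (m : M), φ (env.j l) m = aL l m) ∧
      φ (env.i 1 - env.j (ι 1)) = 0) ∧
    (∀ ψ : U →ₐ[R] Module.End R M, ψ (env.i 1 - env.j (ι 1)) = 0 →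
      (∀ m : M, ψ (env.j (ι 1)) m = m) ∧
      (∀ (a : A) (m : M), ψ (env.j (ι a)) m = ψ (env.i a) m) ∧
      (∀ (f : A) (l : L) (m : M),
        ψ (env.i f) (ψ (env.j l) m) =
          ψ (env.j l) (ψ (env.i f) m) - ψ (env.i (LR.ρ l f)) m) ∧
      (∀ (f : A) (l : L) (m : M),
        ψ (env.j (f • l)) m = ψ (env.i f) (ψ (env.j l) m)) ∧
      (∀ (l l' : L) (m : M),
        ψ (env.j ⁅l, l'⁆) m =
          ψ (env.j l) (ψ (env.j l') m) - ψ (env.j l') (ψ (env.j l) m))) := by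
  classical
  set i' : A →ₐ[R] Module.End R M := Algebra.lsmul R R M with hi'
  have hi'app : ∀ (a : A) (m : M), i' a m = a • m := fun a m => rfl
  have hrel1 : ∀ (a : A) (x : L), aL (a • x) = i' a * aL x := by
    intro a x; ext m; exact haxiom2 a x m
  have hrel2 : ∀ (x : L) (a : A), aL x * i' a - i' a * aL x = i' (LR.ρ x a) := by
    intro x a; ext m
    show aL x (a • m) - a • (aL x m) = (LR.ρ x a) • m
    rw [haxiom1 a x m]; abel
  have hrel3 : ∀ x y : L, aL x * aL y - aL y * aL x = aL ⁅x, y⁆ := by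
    intro x y; ext m
    show aL x (aL y m) - aL y (aL x m) = aL ⁅x, y⁆ m
    rw [haxiom3 x y m]
  obtain ⟨φ, ⟨hφi, hφj⟩, hφuniq⟩ := env.universal (Module.End R M) i' aL hrel1 hrel2 hrel3
  have hφia : ∀ (a : A) (m : M), φ (env.i a) m = a • m := by
    intro a m
    have : φ (env.i a) = i' a := by
      have := congrArg (fun f => f a) hφi; simpa using this
    rw [this]; rfl
  have hφjl : ∀ (l : L) (m : M), φ (env.j l) m = aL l m := by
    intro l m
    have : φ (env.j l) = aL l := by
      have := congrArg (fun f => f l) hφj; simpa using this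
    rw [this]
  have hφkill : φ (env.i 1 - env.j (ι 1)) = 0 := by
    ext m
    simp only [map_sub, LinearMap.sub_apply, LinearMap.zero_apply]
    rw [hφia, hφjl, hpicard, one_smul, sub_self]
  constructor
  · refine ⟨φ, ⟨hφia, hφjl, hφkill⟩, ?_⟩
    intro ψ ⟨hψi, hψj, _⟩
    apply hφuniq
    constructor
    · ext a m
      exact hψi a m
    · ext l m
      exact hψj l m
  · intro ψ hψ
    have hψ1 : ∀ m : M, ψ (env.j (ι 1)) m = m := by
      intro m
      have h : ψ (env.i 1) = ψ (env.j (ι 1)) := by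
        have h0 : ψ (env.i 1) - ψ (env.j (ι 1)) = 0 := by rw [← map_sub]; exact hψ
        exact sub_eq_zero.mp h0
      have h1 : ψ (env.i 1) = 1 := by rw [map_one, map_one]
      rw [← h, h1]; rfl
    refine ⟨hψ1, ?_, ?_, ?_, ?_⟩
    · intro a m
      have h : ι a = a • ι 1 := by rw [← map_smul, smul_eq_mul, mul_one]
      rw [h, env.smul_rel, map_mul]
      show ψ (env.i a) (ψ (env.j (ι 1)) m) = _
      rw [hψ1]
    · intro f l m
      have h := env.der_rel l f
      have := congrArg ψ h
      rw [map_sub, map_mul, map_mul] at this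
      have h2 := congrArg (fun g : Module.End R M => g m) this
      simp only [LinearMap.sub_apply, Module.End.mul_apply] at h2
      have : ψ (env.j l) (ψ (env.i f) m) - ψ (env.i f) (ψ (env.j l) m)
          = ψ (env.i (LR.ρ l f)) m := h2
      rw [← this]; abel
    · intro f l m
      rw [env.smul_rel, map_mul]; rfl
    · intro l l' m
      have h := env.lie_rel l l'
      have := congrArg ψ h
      rw [map_sub, map_mul, map_mul] at this
      have h2 := congrArg (fun g : Module.End R M => g m) this
      simp only [LinearMap.sub_apply, Module.End.mul_apply] at h2
      exact h2.symm
end
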